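/- For any integers t, n with t² - 4n > 0 a perfect square, the number of SL₂(ℤ)-conjugation orbits in the set T(t,n) of 2×2 integer matrices of trace t and determinant n equals √(t² - 4n). Equivalently, the sum over all SL₂(ℤ/Nℤ)-conjugation orbits C of GL₂(ℤ/Nℤ) of U_C(√(t²-4n)) equals √(t²-4n). -/

import Mathlib

open Matrix

namespace Stmt16Aux

abbrev SL2 := Matrix.SpecialLinearGroup (Fin 2) ℤ

lemma coe_inv_eq (γ : SL2) (C : Matrix (Fin 2) (Fin 2) ℤ)
    (h : (γ : Matrix (Fin 2) (Fin 2) ℤ) * C = 1) :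
    ((γ⁻¹ : SL2) : Matrix (Fin 2) (Fin 2) ℤ) = C := by
  have h2 : ((γ⁻¹ : SL2) : Matrix (Fin 2) (Fin 2) ℤ) * (γ : Matrix (Fin 2) (Fin 2) ℤ) = 1 := by
    rw [← Matrix.SpecialLinearGroup.coe_mul, inv_mul_cancel]
    simp
  calc ((γ⁻¹ : SL2) : Matrix (Fin 2) (Fin 2) ℤ)
      = ↑(γ⁻¹) * ((γ : Matrix (Fin 2) (Fin 2) ℤ) * C) := by rw [h, mul_one]
    _ = C := by rw [← mul_assoc, h2, one_mul]

lemma shift (lam mu j k : ℤ) :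
    ∃ γ : SL2, (γ : Matrix (Fin 2) (Fin 2) ℤ) * !![lam, j; 0, mu] *
      ((γ⁻¹ : SL2) : Matrix (Fin 2) (Fin 2) ℤ) = !![lam, j - k * (lam - mu); 0, mu] := by
  refine ⟨⟨!![1, k; 0, 1], by simp [Matrix.det_fin_two_of]⟩, ?_⟩
  erw [coe_inv_eq _ !![1, -k; 0, 1] (by
    show !![(1:ℤ), k; 0, 1] * !![1, -k; 0, 1] = 1
    rw [Matrix.mul_fin_two]
    norm_num
    exact Matrix.one_fin_two.symm)]
  show !![(1:ℤ), k; 0, 1] * !![lam, j; 0, mu] * !![1, -k; 0, 1] = _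
  rw [Matrix.mul_fin_two, Matrix.mul_fin_two]
  congr 1 <;> ring

lemma rigidity (lam mu j j' : ℤ) (hmult : mu < lam) (γ : SL2)
    (h : (γ : Matrix (Fin 2) (Fin 2) ℤ) * !![lam, j; 0, mu] *
      ((γ⁻¹ : SL2) : Matrix (Fin 2) (Fin 2) ℤ) = !![lam, j'; 0, mu]) :
    (lam - mu) ∣ (j - j') := by
  set a := (γ : Matrix (Fin 2) (Fin 2) ℤ) 0 0 with ha
  set b := (γ : Matrix (Fin 2) (Fin 2) ℤ) 0 1 with hb
  set c := (γ : Matrix (Fin 2) (Fin 2) ℤ) 1 0 with hc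
  set d := (γ : Matrix (Fin 2) (Fin 2) ℤ) 1 1 with hd
  have hdet : a * d - b * c = 1 := by
    have := γ.2
    rw [Matrix.det_fin_two] at this
    exact this
  have hA : (γ : Matrix (Fin 2) (Fin 2) ℤ) = !![a, b; c, d] := Matrix.eta_fin_two _
  have hC : ((γ⁻¹ : SL2) : Matrix (Fin 2) (Fin 2) ℤ) = !![d, -b; -c, a] := by
    apply coe_inv_eq
    rw [hA, Matrix.mul_fin_two]
    have h1 : a * d + b * -c = 1 := by linarith
    have h2 : c * d + d * -c = 0 := by ring
    have h3 : a * -b + b * a = 0 := by ring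
    have h4 : c * -b + d * a = 1 := by linarith
    rw [h1, h2, h3, h4, Matrix.one_fin_two]
  rw [hA, hC, Matrix.mul_fin_two, Matrix.mul_fin_two] at h
  have h10 : (c * lam + d * 0) * d + (c * j + d * mu) * -c = 0 := by
    have h' := congrFun (congrFun h 1) 0
    simp at h'
    linear_combination h'
  have h11 : (c * lam + d * 0) * -b + (c * j + d * mu) * a = mu := by
    have h' := congrFun (congrFun h 1) 1
    simp at h'
    linear_combination h'
  have h01 : (a * lam + b * 0) * -b + (a * j + b * mu) * a = j' := by
    have h' := congrFun (congrFun h 0) 1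
    simp at h'
    linear_combination h'
  by_cases hc0 : c = 0
  · rw [hc0] at hdet
    have had : a * d = 1 := by linear_combination hdet
    rcases Int.mul_eq_one_iff_eq_one_or_neg_one.mp had with ⟨ha1, hd1⟩ | ⟨ha1, hd1⟩
    · rw [ha1] at h01
      exact ⟨b, by linear_combination h01⟩
    · rw [ha1] at h01
      exact ⟨-b, by linear_combination h01⟩
  · exfalso
    have hkey : d * (lam - mu) = c * j := by
      rcases mul_eq_zero.mp (show c * (d * (lam - mu) - c * j) = 0 by linear_combination h10)
        with h' | h'
      · exact absurd h' hc0
      · linarith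
    have : mu = lam := by linear_combination lam * hdet - h11 - a * hkey
    omega

lemma normal_form (lam mu : ℤ) (hne : lam ≠ mu) (M : Matrix (Fin 2) (Fin 2) ℤ)
    (htr : M.trace = lam + mu) (hdet : M.det = lam * mu) :
    ∃ (j : ℤ) (γ : SL2), (γ : Matrix (Fin 2) (Fin 2) ℤ) * M *
      ((γ⁻¹ : SL2) : Matrix (Fin 2) (Fin 2) ℤ) = !![lam, j; 0, mu] := by
  set a := M 0 0 with ha
  set b := M 0 1 with hb
  set c := M 1 0 with hc
  set d := M 1 1 with hd
  have hM : M = !![a, b; c, d] := Matrix.eta_fin_two M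
  have htr' : a + d = lam + mu := by
    rw [hM, Matrix.trace_fin_two_of] at htr; exact htr
  have hdet' : a * d - b * c = lam * mu := by
    rw [hM, Matrix.det_fin_two] at hdet; exact hdet
  -- find a nonzero integer eigenvector (p, q) for eigenvalue lam
  obtain ⟨p, q, hpq0, he1, he2⟩ :
      ∃ p q : ℤ, ¬(p = 0 ∧ q = 0) ∧ a * p + b * q = lam * p ∧ c * p + d * q = lam * q := by
    by_cases h2 : lam - d = 0 ∧ c = 0
    · obtain ⟨h2a, h2b⟩ := h2
      refine ⟨b, lam - a, ?_, by ring, by linear_combination lam * htr' - hdet'⟩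
      rintro ⟨hb0, hla⟩
      omega
    · exact ⟨lam - d, c, h2, by linear_combination lam * htr' - hdet', by ring⟩
  -- make it primitive
  set g0 : ℕ := Int.gcd p q with hg0def
  have hg0pos : 0 < Int.gcd p q := by
    rcases Nat.eq_zero_or_pos (Int.gcd p q) with h' | h'
    · exact absurd (Int.gcd_eq_zero_iff.mp h') hpq0
    · exact h'
  have hg0 : (g0 : ℤ) ≠ 0 := by
    simp only [hg0def]
    exact_mod_cast hg0pos.ne'
  set p' := p / (g0 : ℤ) with hp'
  set q' := q / (g0 : ℤ) with hq'
  have hpg : (g0 : ℤ) * p' = p := Int.mul_ediv_cancel' (Int.gcd_dvd_left p q)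
  have hqg : (g0 : ℤ) * q' = q := Int.mul_ediv_cancel' (Int.gcd_dvd_right p q)
  have hcop : Int.gcd p' q' = 1 := Int.gcd_div_gcd_div_gcd hg0pos
  have he1' : a * p' + b * q' = lam * p' := by
    apply mul_left_cancel₀ hg0
    linear_combination he1 + a * hpg + b * hqg - lam * hpg
  have he2' : c * p' + d * q' = lam * q' := by
    apply mul_left_cancel₀ hg0
    linear_combination he2 + c * hpg + d * hqg - lam * hqg
  obtain ⟨x, y, hxy⟩ : IsCoprime p' q' := Int.isCoprime_iff_gcd_eq_one.mpr hcop
  -- build the conjugating matrix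
  set D : Matrix (Fin 2) (Fin 2) ℤ := !![p', -y; q', x] with hD
  set C : Matrix (Fin 2) (Fin 2) ℤ := !![x, y; -q', p'] with hCdef
  have hdetD : D.det = 1 := by
    rw [hD, Matrix.det_fin_two_of]; linear_combination hxy
  set δ : SL2 := ⟨D, hdetD⟩ with hδ
  have hδC : (δ : Matrix (Fin 2) (Fin 2) ℤ) * C = 1 := by
    show D * C = 1
    rw [hD, hCdef, Matrix.mul_fin_two]
    have e1 : p' * x + -y * -q' = 1 := by linear_combination hxy
    have e2 : p' * y + -y * p' = 0 := by ring
    have e3 : q' * x + x * -q' = 0 := by ring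
    have e4 : q' * y + x * p' = 1 := by linear_combination hxy
    rw [e1, e2, e3, e4, Matrix.one_fin_two]
  refine ⟨(x * a + y * c) * -y + (x * b + y * d) * x, δ⁻¹, ?_⟩
  rw [coe_inv_eq δ C hδC, inv_inv]
  show C * M * D = _
  rw [hCdef, hM, hD, Matrix.mul_fin_two, Matrix.mul_fin_two]
  have e00 : (x * a + y * c) * p' + (x * b + y * d) * q' = lam := by
    linear_combination x * he1' + y * he2' + lam * hxy
  have e10 : (-q' * a + p' * c) * p' + (-q' * b + p' * d) * q' = 0 := by
    linear_combination (-q') * he1' + p' * he2'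
  have e11 : (-q' * a + p' * c) * -y + (-q' * b + p' * d) * x = mu := by
    linear_combination htr' + (a + d - lam) * hxy - x * he1' - y * he2'
  rw [e00, e10, e11]

end Stmt16Aux

open Stmt16Aux in
theorem stmt_16 (t n : ℤ) (s : ℕ) (hs : 0 < s) (hsq : (s : ℤ) ^ 2 = t ^ 2 - 4 * n) :
    Nat.card (Quot (fun A B : {M : Matrix (Fin 2) (Fin 2) ℤ // M.trace = t ∧ M.det = n} =>
      ∃ g : Matrix.SpecialLinearGroup (Fin 2) ℤ,
        (g : Matrix (Fin 2) (Fin 2) ℤ) * A.1 *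
          ((g⁻¹ : Matrix.SpecialLinearGroup (Fin 2) ℤ) : Matrix (Fin 2) (Fin 2) ℤ) = B.1)) =
      s := by
  haveI : NeZero s := ⟨hs.ne'⟩
  -- integer eigenvalues
  obtain ⟨lam, mu, hlmd, hlmt, hlmn⟩ :
      ∃ lam mu : ℤ, lam - mu = (s : ℤ) ∧ lam + mu = t ∧ lam * mu = n := by
    have heven : Even (t + (s : ℤ)) := by
      rcases Int.even_mul.mp (⟨2 * n, by linear_combination -hsq⟩ :
          Even ((t + (s : ℤ)) * (t - (s : ℤ)))) with h' | h'
      · exact h'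
      · obtain ⟨r, hr⟩ := h'
        exact ⟨r + s, by omega⟩
    obtain ⟨l, hl⟩ := heven
    refine ⟨l, t - l, by omega, by ring, ?_⟩
    have h4 : (4 : ℤ) * (l * (t - l)) = 4 * n := by
      linear_combination (2 * l - t + (s : ℤ)) * hl - hsq
    exact mul_left_cancel₀ (by norm_num : (4 : ℤ) ≠ 0) h4
  have hmult : mu < lam := by omega
  have hne : lam ≠ mu := by omega
  set SS := {M : Matrix (Fin 2) (Fin 2) ℤ // M.trace = t ∧ M.det = n} with hSS
  let R : SS → SS → Prop := fun A B =>
    ∃ g : Matrix.SpecialLinearGroup (Fin 2) ℤ,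
      (g : Matrix (Fin 2) (Fin 2) ℤ) * A.1 *
        ((g⁻¹ : Matrix.SpecialLinearGroup (Fin 2) ℤ) : Matrix (Fin 2) (Fin 2) ℤ) = B.1
  show Nat.card (Quot R) = s
  have hcoe : ∀ g : SL2, ((g⁻¹ : SL2) : Matrix (Fin 2) (Fin 2) ℤ) * (g : Matrix (Fin 2) (Fin 2) ℤ) = 1 := by
    intro g
    rw [← Matrix.SpecialLinearGroup.coe_mul, inv_mul_cancel]
    simp
  have hcoe' : ∀ g : SL2, (g : Matrix (Fin 2) (Fin 2) ℤ) * ((g⁻¹ : SL2) : Matrix (Fin 2) (Fin 2) ℤ) = 1 := by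
    intro g
    rw [← Matrix.SpecialLinearGroup.coe_mul, mul_inv_cancel]
    simp
  have hEquiv : Equivalence R := by
    constructor
    · intro A
      exact ⟨1, by simp⟩
    · rintro A B ⟨g, hg⟩
      refine ⟨g⁻¹, ?_⟩
      rw [← hg, inv_inv]
      calc ((g⁻¹ : SL2) : Matrix (Fin 2) (Fin 2) ℤ) *
            ((g : Matrix (Fin 2) (Fin 2) ℤ) * A.1 * ((g⁻¹ : SL2) : Matrix (Fin 2) (Fin 2) ℤ)) *
            (g : Matrix (Fin 2) (Fin 2) ℤ)
          = (((g⁻¹ : SL2) : Matrix (Fin 2) (Fin 2) ℤ) * (g : Matrix (Fin 2) (Fin 2) ℤ)) * A.1 *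
            (((g⁻¹ : SL2) : Matrix (Fin 2) (Fin 2) ℤ) * (g : Matrix (Fin 2) (Fin 2) ℤ)) := by
            noncomm_ring
        _ = A.1 := by rw [hcoe, one_mul, mul_one]
    · rintro A B C ⟨g1, hg1⟩ ⟨g2, hg2⟩
      refine ⟨g2 * g1, ?_⟩
      rw [_root_.mul_inv_rev, Matrix.SpecialLinearGroup.coe_mul, Matrix.SpecialLinearGroup.coe_mul,
        ← hg2, ← hg1]
      noncomm_ring
  have hrepP : ∀ j : ℤ, Matrix.trace !![lam, j; 0, mu] = t ∧ Matrix.det !![lam, j; 0, mu] = n :=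
    fun j => ⟨by rw [Matrix.trace_fin_two_of]; omega,
      by rw [Matrix.det_fin_two_of]; linear_combination hlmn⟩
  let rep : ℤ → SS := fun j => ⟨!![lam, j; 0, mu], hrepP j⟩
  let φ : ZMod s → Quot R := fun x => Quot.mk R (rep (x.val : ℤ))
  have hinj : Function.Injective φ := by
    intro x y hxy
    have hrel : R (rep (x.val : ℤ)) (rep (y.val : ℤ)) :=
      (Equivalence.eqvGen_iff hEquiv).mp (Quot.eqvGen_exact hxy)
    obtain ⟨g, hg⟩ := hrel
    have hdvd : (lam - mu) ∣ ((x.val : ℤ) - (y.val : ℤ)) :=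
      rigidity lam mu _ _ hmult g hg
    rw [hlmd] at hdvd
    have h0 : (((x.val : ℤ) - (y.val : ℤ) : ℤ) : ZMod s) = 0 :=
      (ZMod.intCast_zmod_eq_zero_iff_dvd _ s).mpr hdvd
    have hxy' : ((x.val : ℕ) : ZMod s) = ((y.val : ℕ) : ZMod s) := by
      push_cast at h0
      rwa [sub_eq_zero] at h0
    rwa [ZMod.natCast_rightInverse x, ZMod.natCast_rightInverse y] at hxy'
  have hsurj : Function.Surjective φ := by
    intro qq
    induction qq using Quot.ind with
    | _ M =>
      obtain ⟨j0, γ, hγ⟩ := normal_form lam mu hne M.1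
        (by rw [M.2.1]; omega) (by rw [M.2.2]; exact hlmn.symm)
      have h1 : Quot.mk R M = Quot.mk R (rep j0) := Quot.sound ⟨γ, hγ⟩
      set v : ℕ := (j0 : ZMod s).val with hv
      have hdvd : (s : ℤ) ∣ (j0 - (v : ℤ)) := by
        apply (ZMod.intCast_zmod_eq_zero_iff_dvd _ s).mp
        push_cast
        rw [hv, ZMod.natCast_rightInverse (j0 : ZMod s)]
        ring
      obtain ⟨k, hk⟩ := hdvd
      obtain ⟨γ2, hγ2⟩ := shift lam mu j0 k
      have hj : j0 - k * (lam - mu) = (v : ℤ) := by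
        rw [hlmd]; linear_combination hk
      rw [hj] at hγ2
      have h2 : Quot.mk R (rep j0) = Quot.mk R (rep (v : ℤ)) := Quot.sound ⟨γ2, hγ2⟩
      exact ⟨(j0 : ZMod s), by rw [show φ (j0 : ZMod s) = Quot.mk R (rep (v : ℤ)) from rfl, ← h2, ← h1]⟩
  calc Nat.card (Quot R) = Nat.card (ZMod s) := (Nat.card_eq_of_bijective φ ⟨hinj, hsurj⟩).symm
    _ = s := Nat.card_zmod s
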